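/- Let c > 0 and θ₀ ∈ ℝ, and let γ : ℝ → ℝ⁵ be the curve x₁(t) = 2√c·sech(√c·t)·cos θ₀, x₂(t) = 2√c·sech(√c·t)·sin θ₀, y₁(t) = −2c·sech(√c·t)·tanh(√c·t)·cos θ₀, y₂(t) = −2c·sech(√c·t)·tanh(√c·t)·sin θ₀, z(t) = c(1 − 2·sech²(√c·t)). Then γ(t) → (0,0,0,0,c) as t → +∞ and as t → −∞, and for all t one has H(γ(t)) = c²/2, I(γ(t)) = 0, and C(γ(t)) = c; i.e., γ is a homoclinic orbit to the unstable equilibrium (0,0,0,0,c) lying on the level set H = c²/2, I = 0 of the symplectic leaf C⁻¹(c). -/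

import Mathlib

open Filter

lemma abs_tanh_le_one (u : ℝ) : |Real.tanh u| ≤ 1 := by
  rw [Real.tanh_eq_sinh_div_cosh, abs_div, abs_of_pos (Real.cosh_pos u),
    div_le_one (Real.cosh_pos u)]
  have h1 := Real.sinh_lt_cosh (x := u)
  have h2 := Real.sinh_lt_cosh (x := -u)
  rw [Real.sinh_neg, Real.cosh_neg] at h2
  exact abs_le.2 ⟨by linarith, by linarith⟩

lemma cosh_tendsto_atTop : Tendsto Real.cosh atTop atTop := by
  apply tendsto_atTop_mono (f := fun x => Real.exp x / 2)
  · intro x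
    rw [Real.cosh_eq]
    have := (Real.exp_pos (-x)).le
    linarith
  · exact (Real.tendsto_exp_atTop).atTop_div_const two_pos

lemma cosh_tendsto_atBot : Tendsto Real.cosh atBot atTop := by
  apply tendsto_atTop_mono (f := fun x => Real.exp (-x) / 2)
  · intro x
    rw [Real.cosh_eq]
    have := (Real.exp_pos x).le
    linarith
  · exact (Real.tendsto_exp_atTop.comp tendsto_neg_atBot_atTop).atTop_div_const two_pos

/-- The homoclinic curve tends to the equilibrium `(0,0,0,0,c)` as `t → ±∞` and lies on the
level set `H = c²/2`, `I = 0` of the symplectic leaf `C⁻¹(c)`. -/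
theorem maxwell_bloch_homoclinic_orbit (c θ₀ : ℝ) (hc : 0 < c)
    (x1 y1 x2 y2 z : ℝ → ℝ)
    (hx1 : ∀ t, x1 t = 2 * Real.sqrt c * (Real.cosh (Real.sqrt c * t))⁻¹ * Real.cos θ₀)
    (hx2 : ∀ t, x2 t = 2 * Real.sqrt c * (Real.cosh (Real.sqrt c * t))⁻¹ * Real.sin θ₀)
    (hy1 : ∀ t, y1 t = -(2 * c * (Real.cosh (Real.sqrt c * t))⁻¹ *
      Real.tanh (Real.sqrt c * t) * Real.cos θ₀))
    (hy2 : ∀ t, y2 t = -(2 * c * (Real.cosh (Real.sqrt c * t))⁻¹ *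
      Real.tanh (Real.sqrt c * t) * Real.sin θ₀))
    (hz : ∀ t, z t = c * (1 - 2 * ((Real.cosh (Real.sqrt c * t))⁻¹) ^ 2)) :
    Tendsto (fun t => (x1 t, y1 t, x2 t, y2 t, z t)) atTop
      (nhds ((0, 0, 0, 0, c) : ℝ × ℝ × ℝ × ℝ × ℝ)) ∧
    Tendsto (fun t => (x1 t, y1 t, x2 t, y2 t, z t)) atBot
      (nhds ((0, 0, 0, 0, c) : ℝ × ℝ × ℝ × ℝ × ℝ)) ∧
    (∀ t : ℝ, (1 / 2) * ((y1 t) ^ 2 + (y2 t) ^ 2 + (z t) ^ 2) = c ^ 2 / 2 ∧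
      x2 t * y1 t - x1 t * y2 t = 0 ∧
      (1 / 2) * ((x1 t) ^ 2 + (x2 t) ^ 2) + z t = c) := by
  have hsc : 0 < Real.sqrt c := Real.sqrt_pos.2 hc
  -- generic limit argument for a filter l with √c * t → atTop under cosh
  have key : ∀ l : Filter ℝ, Tendsto (fun t => Real.cosh (Real.sqrt c * t)) l atTop →
      Tendsto (fun t => (x1 t, y1 t, x2 t, y2 t, z t)) l
        (nhds ((0, 0, 0, 0, c) : ℝ × ℝ × ℝ × ℝ × ℝ)) := by
    intro l hl
    have hsech : Tendsto (fun t => (Real.cosh (Real.sqrt c * t))⁻¹) l (nhds 0) :=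
      hl.inv_tendsto_atTop
    have hst : Tendsto (fun t => (Real.cosh (Real.sqrt c * t))⁻¹ *
        Real.tanh (Real.sqrt c * t)) l (nhds 0) := by
      apply squeeze_zero_norm ?_ hsech
      intro t
      rw [Real.norm_eq_abs, abs_mul, abs_of_pos (inv_pos.2 (Real.cosh_pos _))]
      calc (Real.cosh (Real.sqrt c * t))⁻¹ * |Real.tanh (Real.sqrt c * t)|
          ≤ (Real.cosh (Real.sqrt c * t))⁻¹ * 1 := by
            exact mul_le_mul_of_nonneg_left (abs_tanh_le_one _)
              (inv_pos.2 (Real.cosh_pos _)).le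
        _ = _ := mul_one _
    refine Tendsto.prodMk_nhds ?_ (Tendsto.prodMk_nhds ?_ (Tendsto.prodMk_nhds ?_
      (Tendsto.prodMk_nhds ?_ ?_)))
    · have h := (hsech.const_mul (2 * Real.sqrt c)).mul_const (Real.cos θ₀)
      simp only [mul_zero, zero_mul] at h
      exact h.congr fun t => by rw [hx1 t]
    · have h := ((hst.const_mul (2 * c)).mul_const (Real.cos θ₀)).neg
      simp only [mul_zero, zero_mul, neg_zero] at h
      exact h.congr fun t => by rw [hy1 t]; ring
    · have h := (hsech.const_mul (2 * Real.sqrt c)).mul_const (Real.sin θ₀)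
      simp only [mul_zero, zero_mul] at h
      exact h.congr fun t => by rw [hx2 t]
    · have h := ((hst.const_mul (2 * c)).mul_const (Real.sin θ₀)).neg
      simp only [mul_zero, zero_mul, neg_zero] at h
      exact h.congr fun t => by rw [hy2 t]; ring
    · have h : Tendsto (fun t => c * (1 - 2 * ((Real.cosh (Real.sqrt c * t))⁻¹) ^ 2)) l
          (nhds (c * (1 - 2 * (0 : ℝ) ^ 2))) :=
        (((hsech.pow 2).const_mul 2).const_sub 1).const_mul c
      simp only [ne_eq, OfNat.ofNat_ne_zero, not_false_eq_true, zero_pow, mul_zero,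
        sub_zero, mul_one] at h
      exact h.congr fun t => by rw [hz t]
  refine ⟨key _ (cosh_tendsto_atTop.comp (tendsto_atTop_atTop_of_monotone
      (fun a b hab => by nlinarith) (fun b => ⟨b / Real.sqrt c, by
        rw [mul_div_cancel₀ _ hsc.ne']⟩))), ?_, ?_⟩
  · exact key _ (cosh_tendsto_atBot.comp (tendsto_atBot_atBot_of_monotone
      (fun a b hab => by nlinarith) (fun b => ⟨b / Real.sqrt c, by
        rw [mul_div_cancel₀ _ hsc.ne']⟩)))
  · intro t
    have hcu : Real.cosh (Real.sqrt c * t) ≠ 0 := (Real.cosh_pos _).ne'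
    have hsq : Real.cosh (Real.sqrt c * t) ^ 2 = Real.sinh (Real.sqrt c * t) ^ 2 + 1 :=
      Real.cosh_sq _
    have htrig : Real.sin θ₀ ^ 2 + Real.cos θ₀ ^ 2 = 1 := Real.sin_sq_add_cos_sq θ₀
    have hrc : Real.sqrt c ^ 2 = c := Real.sq_sqrt hc.le
    rw [hx1 t, hx2 t, hy1 t, hy2 t, hz t, Real.tanh_eq_sinh_div_cosh]
    refine ⟨?_, by ring, ?_⟩
    · field_simp
      linear_combination (-4) * hsq +
        (4 * Real.sinh (Real.sqrt c * t) ^ 2) * htrig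
    · field_simp
      linear_combination 2 * hrc +
        (2 * Real.sqrt c ^ 2) * htrig
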